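/- (Lemma 1, part b.) Let (G_t,H_t), t ∈ ℕ, be a sequence of CSS pairs with block lengths n_t → ∞, k_t = n_t − rank(G_t) − rank(H_t), and suppose the rates k_t/n_t converge to some R ≥ 0. Fix K > 0 and 0 ≤ p ≤ 1. If liminf_{t→∞} [ΔF_e(G_t,H_t;K)]_p / n_t > 0, then limsup_{t→∞} P_succ(G_t,H_t;K,p) < 1; in particular P_succ(G_t,H_t;K,p) does not converge to 1. -/

import Mathlib

open Matrix Filter

/-- Partition function `Z_e(G;K)` of the random-bond Ising model in Wegner's form. -/
noncomputable def Zf {ρ : Type*} [Fintype ρ] [DecidableEq ρ] {n : ℕ}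
    (G : Matrix ρ (Fin n) (ZMod 2)) (e : Fin n → ZMod 2) (K : ℝ) : ℝ :=
  ∑ α : ρ → ZMod 2,
    Real.exp (K * ∑ b : Fin n, (-1 : ℝ) ^ ((e b).val + ((Matrix.vecMul α G) b).val))

/-- `Hs` is an adapted dual of `H`: it stacks `G` on top of `k` extra rows, and its
row space equals `C_H^⊥ = {c | H cᵀ = 0}`. -/
def IsAdaptedDual {rG rH k n : ℕ} (G : Matrix (Fin rG) (Fin n) (ZMod 2))
    (H : Matrix (Fin rH) (Fin n) (ZMod 2))
    (Hs : Matrix (Fin rG ⊕ Fin k) (Fin n) (ZMod 2)) : Prop :=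
  (∀ i, Hs (Sum.inl i) = G i) ∧
  LinearMap.range Hs.vecMulLinear = LinearMap.ker H.mulVecLin

/-- Homological difference `ΔF_e(G,H;K) = ln Z_e(H*;K) − ln Z_e(G;K)`. -/
noncomputable def deltaF {ρ ρ' : Type*} [Fintype ρ] [DecidableEq ρ] [Fintype ρ'] [DecidableEq ρ'] {n : ℕ}
    (G : Matrix ρ (Fin n) (ZMod 2)) (Hs : Matrix ρ' (Fin n) (ZMod 2))
    (e : Fin n → ZMod 2) (K : ℝ) : ℝ :=
  Real.log (Zf Hs e K) - Real.log (Zf G e K)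

/-- Disorder average `[X_e]_p = Σ_e p^{|e|}(1−p)^{n−|e|} X_e`. -/
noncomputable def davg {n : ℕ} (p : ℝ) (X : (Fin n → ZMod 2) → ℝ) : ℝ :=
  ∑ e : Fin n → ZMod 2, p ^ hammingNorm e * (1 - p) ^ (n - hammingNorm e) * X e

/-- Average success probability of maximum-likelihood decoding. -/
noncomputable def Psucc {ρ ρ' : Type*} [Fintype ρ] [DecidableEq ρ] [Fintype ρ'] [DecidableEq ρ'] {n : ℕ}
    (G : Matrix ρ (Fin n) (ZMod 2)) (Hs : Matrix ρ' (Fin n) (ZMod 2))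
    (K p : ℝ) : ℝ :=
  davg p (fun e => Zf G e K / Zf Hs e K)

/-- CSS distance `d_G`: minimum Hamming weight of a vector `c` with `H cᵀ = 0`
that is not in the row space of `G`. -/
noncomputable def dCSS {rG rH n : ℕ} (G : Matrix (Fin rG) (Fin n) (ZMod 2))
    (H : Matrix (Fin rH) (Fin n) (ZMod 2)) : ℕ :=
  sInf {w | ∃ c : Fin n → ZMod 2,
    H.mulVec c = 0 ∧ (¬ ∃ α, Matrix.vecMul α G = c) ∧ hammingNorm c = w}

section Aux

lemma sum_neg_one_pow_abs_le {n : ℕ} (f : Fin n → ℕ) :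
    |∑ b : Fin n, (-1 : ℝ) ^ (f b)| ≤ (n : ℝ) := by
  calc |∑ b : Fin n, (-1 : ℝ) ^ (f b)| ≤ ∑ b : Fin n, |(-1 : ℝ) ^ (f b)| :=
        Finset.abs_sum_le_sum_abs _ _
    _ = (n : ℝ) := by simp [abs_pow]

lemma Zf_ub {ρ : Type*} [Fintype ρ] [DecidableEq ρ] {n : ℕ}
    (G : Matrix ρ (Fin n) (ZMod 2)) (e : Fin n → ZMod 2) {K : ℝ} (hK : 0 ≤ K) :
    Zf G e K ≤ (Fintype.card (ρ → ZMod 2) : ℝ) * Real.exp (K * n) := by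
  unfold Zf
  calc (∑ α : ρ → ZMod 2,
        Real.exp (K * ∑ b : Fin n, (-1 : ℝ) ^ ((e b).val + ((Matrix.vecMul α G) b).val)))
      ≤ ∑ _α : ρ → ZMod 2, Real.exp (K * n) := by
        refine Finset.sum_le_sum fun α _ => ?_
        refine Real.exp_le_exp.2 (mul_le_mul_of_nonneg_left ?_ hK)
        exact (abs_le.1 (sum_neg_one_pow_abs_le _)).2
    _ = (Fintype.card (ρ → ZMod 2) : ℝ) * Real.exp (K * n) := by
        rw [Finset.sum_const, Finset.card_univ, nsmul_eq_mul]

lemma Zf_lb {ρ : Type*} [Fintype ρ] [DecidableEq ρ] {n : ℕ}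
    (G : Matrix ρ (Fin n) (ZMod 2)) (e : Fin n → ZMod 2) {K : ℝ} (hK : 0 ≤ K) :
    (Fintype.card (ρ → ZMod 2) : ℝ) * Real.exp (-(K * n)) ≤ Zf G e K := by
  unfold Zf
  calc (Fintype.card (ρ → ZMod 2) : ℝ) * Real.exp (-(K * n))
      = ∑ _α : ρ → ZMod 2, Real.exp (-(K * n)) := by
        rw [Finset.sum_const, Finset.card_univ, nsmul_eq_mul]
    _ ≤ ∑ α : ρ → ZMod 2,
        Real.exp (K * ∑ b : Fin n, (-1 : ℝ) ^ ((e b).val + ((Matrix.vecMul α G) b).val)) := by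
        refine Finset.sum_le_sum fun α _ => ?_
        refine Real.exp_le_exp.2 ?_
        have h := (abs_le.1 (sum_neg_one_pow_abs_le
          (fun b => (e b).val + ((Matrix.vecMul α G) b).val))).1
        nlinarith [h, hK]

lemma Zf_pos {ρ : Type*} [Fintype ρ] [DecidableEq ρ] {n : ℕ}
    (G : Matrix ρ (Fin n) (ZMod 2)) (e : Fin n → ZMod 2) (K : ℝ) :
    0 < Zf G e K := by
  unfold Zf
  exact Finset.sum_pos (fun α _ => Real.exp_pos _) ⟨0, Finset.mem_univ _⟩

lemma Zf_le_Zf_adapted {rG k n : ℕ} (G : Matrix (Fin rG) (Fin n) (ZMod 2))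
    (Hs : Matrix (Fin rG ⊕ Fin k) (Fin n) (ZMod 2))
    (h1 : ∀ i, Hs (Sum.inl i) = G i) (e : Fin n → ZMod 2) (K : ℝ) :
    Zf G e K ≤ Zf Hs e K := by
  classical
  have key : ∀ α : Fin rG → ZMod 2,
      Matrix.vecMul (Sum.elim α 0) Hs = Matrix.vecMul α G := by
    intro α; funext b
    simp [Matrix.vecMul, dotProduct, Fintype.sum_sum_type, h1]
  have hinj : Function.Injective
      (fun α : Fin rG → ZMod 2 => (Sum.elim α 0 : Fin rG ⊕ Fin k → ZMod 2)) := by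
    intro a b hab; funext i; exact congrFun hab (Sum.inl i)
  unfold Zf
  calc (∑ α : Fin rG → ZMod 2,
        Real.exp (K * ∑ b : Fin n, (-1 : ℝ) ^ ((e b).val + ((Matrix.vecMul α G) b).val)))
      = ∑ γ ∈ Finset.univ.image
          (fun α : Fin rG → ZMod 2 => (Sum.elim α 0 : Fin rG ⊕ Fin k → ZMod 2)),
          Real.exp (K * ∑ b : Fin n, (-1 : ℝ) ^ ((e b).val + ((Matrix.vecMul γ Hs) b).val)) := by
        rw [Finset.sum_image (fun a _ b _ h => hinj h)]
        exact Finset.sum_congr rfl fun α _ => by rw [key]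
    _ ≤ ∑ γ : Fin rG ⊕ Fin k → ZMod 2,
          Real.exp (K * ∑ b : Fin n, (-1 : ℝ) ^ ((e b).val + ((Matrix.vecMul γ Hs) b).val)) :=
        Finset.sum_le_sum_of_subset_of_nonneg (Finset.subset_univ _)
          (fun _ _ _ => (Real.exp_pos _).le)

lemma deltaF_nonneg {rG k n : ℕ} (G : Matrix (Fin rG) (Fin n) (ZMod 2))
    (Hs : Matrix (Fin rG ⊕ Fin k) (Fin n) (ZMod 2))
    (h1 : ∀ i, Hs (Sum.inl i) = G i) (e : Fin n → ZMod 2) (K : ℝ) :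
    0 ≤ deltaF G Hs e K := by
  unfold deltaF
  have := Real.log_le_log (Zf_pos G e K) (Zf_le_Zf_adapted G Hs h1 e K)
  linarith

lemma deltaF_ub {rG k n : ℕ} (G : Matrix (Fin rG) (Fin n) (ZMod 2))
    (Hs : Matrix (Fin rG ⊕ Fin k) (Fin n) (ZMod 2))
    (e : Fin n → ZMod 2) {K : ℝ} (hK : 0 ≤ K) :
    deltaF G Hs e K ≤ k * Real.log 2 + 2 * K * n := by
  unfold deltaF
  have cardG : (Fintype.card (Fin rG → ZMod 2) : ℝ) = 2 ^ rG := by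
    rw [Fintype.card_fun]; simp
  have cardH : (Fintype.card (Fin rG ⊕ Fin k → ZMod 2) : ℝ) = 2 ^ (rG + k) := by
    rw [Fintype.card_fun]; simp
  have hub : Real.log (Zf Hs e K) ≤ (rG + k) * Real.log 2 + K * n := by
    calc Real.log (Zf Hs e K)
        ≤ Real.log ((Fintype.card (Fin rG ⊕ Fin k → ZMod 2) : ℝ) * Real.exp (K * n)) :=
          Real.log_le_log (Zf_pos _ _ _) (Zf_ub Hs e hK)
      _ = (rG + k) * Real.log 2 + K * n := by
          rw [cardH, Real.log_mul (by positivity) (Real.exp_pos _).ne',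
            Real.log_pow, Real.log_exp]
          push_cast; ring
  have hlb : (rG : ℝ) * Real.log 2 - K * n ≤ Real.log (Zf G e K) := by
    calc (rG : ℝ) * Real.log 2 - K * n
        = Real.log ((Fintype.card (Fin rG → ZMod 2) : ℝ) * Real.exp (-(K * n))) := by
          rw [cardG, Real.log_mul (by positivity) (Real.exp_pos _).ne',
            Real.log_pow, Real.log_exp]
          push_cast; ring
      _ ≤ Real.log (Zf G e K) :=
          Real.log_le_log (by positivity) (Zf_lb G e hK)
  linarith

lemma exp_neg_chord {M x : ℝ} (hM : 0 < M) (hx0 : 0 ≤ x) (hxM : x ≤ M) :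
    Real.exp (-x) ≤ 1 - (1 - Real.exp (-M)) / M * x := by
  have ha : (0 : ℝ) ≤ 1 - x / M := by
    have : x / M ≤ 1 := (div_le_one hM).2 hxM
    linarith
  have hb : (0 : ℝ) ≤ x / M := by positivity
  have h := convexOn_exp.2 (Set.mem_univ (0 : ℝ)) (Set.mem_univ (-M)) ha hb (by ring)
  simp only [smul_eq_mul] at h
  have h1 : (1 - x / M) * (0 : ℝ) + (x / M) * (-M) = -x := by
    field_simp
    ring
  have h2 : (1 - x / M) * Real.exp 0 + (x / M) * Real.exp (-M)
      = 1 - (1 - Real.exp (-M)) / M * x := by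
    rw [Real.exp_zero]; field_simp; ring
  rw [h1, h2] at h
  exact h

lemma weights_sum_one {n : ℕ} (p : ℝ) :
    ∑ e : Fin n → ZMod 2, p ^ hammingNorm e * (1 - p) ^ (n - hammingNorm e) = 1 := by
  classical
  have hterm : ∀ e : Fin n → ZMod 2,
      p ^ hammingNorm e * (1 - p) ^ (n - hammingNorm e)
        = ∏ b : Fin n, (if e b ≠ 0 then p else (1 - p)) := by
    intro e
    rw [Finset.prod_ite, Finset.prod_const, Finset.prod_const]
    have hcard : (Finset.filter (fun b => e b ≠ 0) Finset.univ).card = hammingNorm e := rfl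
    have hcard2 : (Finset.filter (fun b => ¬ e b ≠ 0) Finset.univ).card = n - hammingNorm e := by
      have := Finset.card_filter_add_card_filter_not
        (s := (Finset.univ : Finset (Fin n))) (p := fun b => e b ≠ 0)
      simp only [Finset.card_univ, Fintype.card_fin] at this
      omega
    rw [hcard, hcard2]
  calc ∑ e : Fin n → ZMod 2, p ^ hammingNorm e * (1 - p) ^ (n - hammingNorm e)
      = ∑ e : Fin n → ZMod 2, ∏ b : Fin n, (if e b ≠ 0 then p else (1 - p)) :=
        Finset.sum_congr rfl fun e _ => hterm e
    _ = ∏ _b : Fin n, ∑ x : ZMod 2, (if x ≠ 0 then p else (1 - p)) :=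
        (Fintype.prod_sum fun (_ : Fin n) (x : ZMod 2) => if x ≠ 0 then p else (1 - p)).symm
    _ = 1 := by
        have : ∑ x : ZMod 2, (if x ≠ 0 then p else (1 - p)) = 1 := by
          have huniv : (Finset.univ : Finset (ZMod 2)) = {0, 1} := by decide
          rw [huniv, Finset.sum_insert (by decide), Finset.sum_singleton]
          norm_num
        simp only [this]
        exact Finset.prod_const_one

end Aux

/-- Lemma 1(b): if the disorder-averaged homological difference per bond stays bounded
away from zero, the success probabilities stay bounded away from one. -/
theorem stmt9 (rG rH kk nn : ℕ → ℕ)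
    (G : ∀ t, Matrix (Fin (rG t)) (Fin (nn t)) (ZMod 2))
    (H : ∀ t, Matrix (Fin (rH t)) (Fin (nn t)) (ZMod 2))
    (hGH : ∀ t, G t * (H t)ᵀ = 0)
    (hk : ∀ t, kk t = nn t - (G t).rank - (H t).rank)
    (Hs : ∀ t, Matrix (Fin (rG t) ⊕ Fin (kk t)) (Fin (nn t)) (ZMod 2))
    (hHs : ∀ t, IsAdaptedDual (G t) (H t) (Hs t))
    (hn : Tendsto nn atTop atTop)
    (R : ℝ) (hR : 0 ≤ R)
    (hrate : Tendsto (fun t => (kk t : ℝ) / (nn t : ℝ)) atTop (nhds R))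
    (K : ℝ) (hK : 0 < K) (p : ℝ) (hp0 : 0 ≤ p) (hp1 : p ≤ 1)
    (hliminf : 0 < Filter.liminf
      (fun t => davg p (fun e => deltaF (G t) (Hs t) e K) / (nn t : ℝ)) atTop) :
    Filter.limsup (fun t => Psucc (G t) (Hs t) K p) atTop < 1 ∧
      ¬ Tendsto (fun t => Psucc (G t) (Hs t) K p) atTop (nhds 1) := by
  classical
  have hlog2 : 0 < Real.log 2 := Real.log_pos (by norm_num)
  set C : ℝ := Real.log 2 + 2 * K with hCdef
  have hC : 0 < C := by rw [hCdef]; linarith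
  have hwnn : ∀ (m : ℕ) (e : Fin m → ZMod 2),
      0 ≤ p ^ hammingNorm e * (1 - p) ^ (m - hammingNorm e) := fun m e =>
    mul_nonneg (pow_nonneg hp0 _) (pow_nonneg (by linarith) _)
  have hknn : ∀ t, (kk t : ℝ) ≤ (nn t : ℝ) := fun t => by
    have : kk t ≤ nn t := by rw [hk t]; omega
    exact_mod_cast this
  have hdF0 : ∀ t e, 0 ≤ deltaF (G t) (Hs t) e K := fun t e =>
    deltaF_nonneg _ _ ((hHs t).1) e K
  have hdFub : ∀ t e, deltaF (G t) (Hs t) e K ≤ C * nn t := by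
    intro t e
    calc deltaF (G t) (Hs t) e K ≤ (kk t) * Real.log 2 + 2 * K * nn t :=
          deltaF_ub _ _ e hK.le
      _ ≤ C * nn t := by
          rw [hCdef]
          have := mul_le_mul_of_nonneg_right (hknn t) hlog2.le
          nlinarith
  have hWnn : ∀ t, 0 ≤ davg p (fun e => deltaF (G t) (Hs t) e K) := by
    intro t
    exact Finset.sum_nonneg fun e _ => mul_nonneg (hwnn _ e) (hdF0 t e)
  have hPSnn : ∀ t, 0 ≤ Psucc (G t) (Hs t) K p := by
    intro t
    exact Finset.sum_nonneg fun e _ => mul_nonneg (hwnn _ e)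
      (div_nonneg (Zf_pos _ _ _).le (Zf_pos _ _ _).le)
  -- main pointwise estimate
  have hmain : ∀ t, 1 ≤ nn t →
      Psucc (G t) (Hs t) K p ≤ 1 - (1 - Real.exp (-(C * nn t))) / (C * nn t) *
        davg p (fun e => deltaF (G t) (Hs t) e K) := by
    intro t ht
    have hn0 : (0 : ℝ) < nn t := by exact_mod_cast ht
    have hM : 0 < C * nn t := mul_pos hC hn0
    have hratio : ∀ e, Zf (G t) e K / Zf (Hs t) e K
        = Real.exp (-(deltaF (G t) (Hs t) e K)) := by
      intro e
      unfold deltaF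
      rw [neg_sub, Real.exp_sub, Real.exp_log (Zf_pos _ _ _), Real.exp_log (Zf_pos _ _ _)]
    have hper : ∀ e, Zf (G t) e K / Zf (Hs t) e K
        ≤ 1 - (1 - Real.exp (-(C * nn t))) / (C * nn t) * deltaF (G t) (Hs t) e K := by
      intro e
      rw [hratio e]
      exact exp_neg_chord hM (hdF0 t e) (hdFub t e)
    unfold Psucc davg
    calc (∑ e : Fin (nn t) → ZMod 2,
          p ^ hammingNorm e * (1 - p) ^ (nn t - hammingNorm e) * (Zf (G t) e K / Zf (Hs t) e K))
        ≤ ∑ e : Fin (nn t) → ZMod 2,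
          p ^ hammingNorm e * (1 - p) ^ (nn t - hammingNorm e) *
            (1 - (1 - Real.exp (-(C * nn t))) / (C * nn t) * deltaF (G t) (Hs t) e K) :=
          Finset.sum_le_sum fun e _ => mul_le_mul_of_nonneg_left (hper e) (hwnn _ e)
      _ = ∑ e : Fin (nn t) → ZMod 2,
          (p ^ hammingNorm e * (1 - p) ^ (nn t - hammingNorm e)
            - (1 - Real.exp (-(C * nn t))) / (C * nn t) *
              (p ^ hammingNorm e * (1 - p) ^ (nn t - hammingNorm e) * deltaF (G t) (Hs t) e K)) :=
          Finset.sum_congr rfl fun e _ => by ring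
      _ = (∑ e : Fin (nn t) → ZMod 2, p ^ hammingNorm e * (1 - p) ^ (nn t - hammingNorm e))
            - (1 - Real.exp (-(C * nn t))) / (C * nn t) *
              ∑ e : Fin (nn t) → ZMod 2,
                (p ^ hammingNorm e * (1 - p) ^ (nn t - hammingNorm e) * deltaF (G t) (Hs t) e K) := by
          rw [Finset.sum_sub_distrib, Finset.mul_sum]
      _ = 1 - (1 - Real.exp (-(C * nn t))) / (C * nn t) *
            davg p (fun e => deltaF (G t) (Hs t) e K) := by
          rw [weights_sum_one]; rfl
  -- filter arguments
  set L : ℝ := Filter.liminf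
      (fun t => davg p (fun e => deltaF (G t) (Hs t) e K) / (nn t : ℝ)) atTop with hLdef
  have hbel : Filter.IsBoundedUnder (· ≥ ·) atTop
      (fun t => davg p (fun e => deltaF (G t) (Hs t) e K) / (nn t : ℝ)) :=
    Filter.isBoundedUnder_of ⟨0, fun t => div_nonneg (hWnn t) (Nat.cast_nonneg _)⟩
  have hev1 : ∀ᶠ t in atTop,
      L / 2 < davg p (fun e => deltaF (G t) (Hs t) e K) / (nn t : ℝ) :=
    eventually_lt_of_lt_liminf (by rw [← hLdef]; linarith) hbel
  have hev2 : ∀ᶠ t in atTop, (⌈1 / C⌉₊ + 1 : ℕ) ≤ nn t :=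
    hn.eventually_ge_atTop _
  have hfinal : ∀ᶠ t in atTop,
      Psucc (G t) (Hs t) K p ≤ 1 - L / (4 * C) := by
    filter_upwards [hev1, hev2] with t h1 h2
    have ht1 : 1 ≤ nn t := by omega
    have hn0 : (0 : ℝ) < nn t := by exact_mod_cast ht1
    have hMge : 1 ≤ C * nn t := by
      have h1C : (1 / C : ℝ) ≤ ⌈1 / C⌉₊ := Nat.le_ceil _
      have h2' : ((⌈1 / C⌉₊ : ℝ) + 1) ≤ (nn t : ℝ) := by exact_mod_cast h2
      have : (1 / C : ℝ) ≤ (nn t : ℝ) := by linarith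
      calc (1 : ℝ) = C * (1 / C) := by field_simp
        _ ≤ C * nn t := mul_le_mul_of_nonneg_left this hC.le
    have hMpos : (0 : ℝ) < C * nn t := by linarith
    have hc1 : (1 / 2 : ℝ) ≤ 1 - Real.exp (-(C * nn t)) := by
      have he1 : Real.exp (-(C * nn t)) ≤ Real.exp (-1) := Real.exp_le_exp.2 (by linarith)
      have h21 : (2 : ℝ) ≤ Real.exp 1 := by
        have := Real.add_one_le_exp (1 : ℝ); linarith
      have he2 : Real.exp (-1) ≤ 1 / 2 := by
        rw [Real.exp_neg, ← one_div]
        exact one_div_le_one_div_of_le (by norm_num) h21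
      linarith
    have hWlb : L / 2 * (nn t : ℝ) < davg p (fun e => deltaF (G t) (Hs t) e K) :=
      (lt_div_iff₀ hn0).1 h1
    have hcW : L / (4 * C) ≤ (1 - Real.exp (-(C * nn t))) / (C * nn t) *
        davg p (fun e => deltaF (G t) (Hs t) e K) := by
      rw [div_mul_eq_mul_div, le_div_iff₀ hMpos]
      have hid : L / (4 * C) * (C * (nn t : ℝ)) = L * (nn t : ℝ) / 4 := by
        field_simp
      rw [hid]
      nlinarith [hWnn t, hc1, hWlb, hliminf, hn0]
    have := hmain t ht1
    linarith
  have hbddPS : Filter.IsBoundedUnder (· ≥ ·) atTop (fun t => Psucc (G t) (Hs t) K p) :=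
    Filter.isBoundedUnder_of ⟨0, fun t => hPSnn t⟩
  have hcob : Filter.IsCoboundedUnder (· ≤ ·) atTop (fun t => Psucc (G t) (Hs t) K p) :=
    hbddPS.isCoboundedUnder_le
  have hlimsup : Filter.limsup (fun t => Psucc (G t) (Hs t) K p) atTop ≤ 1 - L / (4 * C) :=
    Filter.limsup_le_of_le hcob hfinal
  have hL4 : 0 < L / (4 * C) := by
    have : (0:ℝ) < L := by rw [hLdef]; exact hliminf
    positivity
  have hlt : Filter.limsup (fun t => Psucc (G t) (Hs t) K p) atTop < 1 := by linarith
  refine ⟨hlt, fun htend => ?_⟩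
  have := htend.limsup_eq
  linarith
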